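/- In the asymmetric-information two-ISP linear demand game, the equilibrium expected utility of the informed ISP_1 is weakly less than the per-ISP equilibrium expected utility in the full-information game: E[D(θ)²]/(4α) + β(4α - β)E[D(θ)]²/(4α(2α - β)²) ≤ α E[D(θ)²]/(2α - β)², with equality iff Var(D(θ)) = 0. Hence the colluding ISP's revenue further improves if the non-colluding ISP also receives signals. -/

import Mathlib

/-- The informed ISP₁'s equilibrium expected utility under asymmetric information,
E[D²]/(4α) + β(4α-β)E[D]²/(4α(2α-β)²), is at most the per-ISP full-information
equilibrium utility α·E[D²]/(2α-β)², with equality iff Var(D) = 0. -/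
theorem stmt5 {Θ : Type*} [Fintype Θ] (P D : Θ → ℝ)
    (hP : ∀ θ, 0 ≤ P θ) (hPsum : ∑ θ, P θ = 1) (hD : ∀ θ, 0 ≤ D θ)
    (α β : ℝ) (hβ : 0 < β) (hαβ : β < α) :
    ((∑ θ, P θ * D θ ^ 2) / (4 * α) +
        β * (4 * α - β) * (∑ θ, P θ * D θ) ^ 2 / (4 * α * (2 * α - β) ^ 2) ≤
      α * (∑ θ, P θ * D θ ^ 2) / (2 * α - β) ^ 2) ∧
    ((∑ θ, P θ * D θ ^ 2) / (4 * α) +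
        β * (4 * α - β) * (∑ θ, P θ * D θ) ^ 2 / (4 * α * (2 * α - β) ^ 2) =
        α * (∑ θ, P θ * D θ ^ 2) / (2 * α - β) ^ 2 ↔
      (∑ θ, P θ * D θ ^ 2) - (∑ θ, P θ * D θ) ^ 2 = 0) := by
  set S1 := ∑ θ, P θ * D θ with hS1
  set S2 := ∑ θ, P θ * D θ ^ 2 with hS2
  have hα : (0:ℝ) < α := lt_trans hβ hαβ
  have h2αβ : (0:ℝ) < 2 * α - β := by linarith
  have hvar : S1 ^ 2 ≤ S2 := by
    have key := Finset.sum_mul_sq_le_sq_mul_sq (Finset.univ : Finset Θ)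
      (fun θ => Real.sqrt (P θ)) (fun θ => Real.sqrt (P θ) * D θ)
    have e1 : ∀ θ : Θ, Real.sqrt (P θ) * (Real.sqrt (P θ) * D θ) = P θ * D θ := by
      intro θ; rw [← mul_assoc, Real.mul_self_sqrt (hP θ)]
    have e2 : ∀ θ : Θ, Real.sqrt (P θ) ^ 2 = P θ := fun θ => Real.sq_sqrt (hP θ)
    have e3 : ∀ θ : Θ, (Real.sqrt (P θ) * D θ) ^ 2 = P θ * D θ ^ 2 := by
      intro θ; rw [mul_pow, e2]
    rw [Finset.sum_congr rfl (fun θ _ => e1 θ), Finset.sum_congr rfl (fun θ _ => e2 θ),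
      Finset.sum_congr rfl (fun θ _ => e3 θ), hPsum, one_mul] at key
    exact key
  have hc : (0:ℝ) < β * (4 * α - β) / (4 * α * (2 * α - β) ^ 2) :=
    div_pos (mul_pos hβ (by linarith)) (by positivity)
  have hid : α * S2 / (2 * α - β) ^ 2 -
      (S2 / (4 * α) + β * (4 * α - β) * S1 ^ 2 / (4 * α * (2 * α - β) ^ 2)) =
      β * (4 * α - β) / (4 * α * (2 * α - β) ^ 2) * (S2 - S1 ^ 2) := by
    rw [div_add_div _ _ (by positivity) (by positivity), div_sub_div _ _ (by positivity) (by positivity),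
      div_mul_eq_mul_div, div_eq_div_iff (by positivity) (by positivity)]
    ring
  constructor
  · nlinarith [mul_le_mul_of_nonneg_left hvar hc.le]
  · constructor
    · intro h
      have : β * (4 * α - β) / (4 * α * (2 * α - β) ^ 2) * (S2 - S1 ^ 2) = 0 := by
        rw [← hid, h]; ring
      rcases mul_eq_zero.1 this with h' | h'
      · exact absurd h' hc.ne'
      · exact h'
    · intro h
      have := hid
      rw [h, mul_zero, sub_eq_zero] at this
      linarith [this]
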